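/- arXiv:2411.14105 — 3 statements merged into one kernel-verified Lean document; each statement's English description precedes it below -/
import Mathlib

section
/- Let T > 0 and let α be a p.d.f. on [0,T] with quantile function α⁻¹. Then for every t in the closure (in [0,T]) of the image α⁻¹([0,1]) = { α⁻¹(s) : s ∈ [0,1] }, the right limit of the composed function t' ↦ α⁻¹(α(t')) at t equals t; that is, lim_{t' ↓ t} α⁻¹(α(t')) = t for t < T, and α⁻¹(α(T)) = T when t = T. -/
open Set Filter Topology

/-- Let `T > 0` and let `α` be a p.d.f. on `[0,T]` with quantile
function `αinv`.  Then for every `t` in the closure (in `[0,T]`) of the image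
`αinv '' [0,1]`, the right limit of `t' ↦ αinv (α t')` at `t` equals `t`:
`lim_{t' ↓ t} αinv (α t') = t` for `t < T`, and `αinv (α T) = T` when `t = T`. -/
theorem quantile_comp_pdf_right_limit_on_closure_image
    (T : ℝ) (hT : 0 < T)
    (α : ℝ → ℝ)
    (hmono : ∀ ⦃t t' : ℝ⦄, t ∈ Icc 0 T → t' ∈ Icc 0 T → t ≤ t' → α t ≤ α t')
    (hrange : ∀ t ∈ Icc (0:ℝ) T, α t ∈ Icc (0:ℝ) 1)
    (hrc : ∀ t ∈ Ico (0:ℝ) T, Tendsto α (𝓝[>] t) (𝓝 (α t)))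
    (hαT : α T = 1)
    (αinv : ℝ → ℝ)
    (hαinv : ∀ s : ℝ, αinv s = sInf {t : ℝ | t ∈ Icc 0 T ∧ s ≤ α t}) :
    ∀ t ∈ closure (αinv '' Icc (0:ℝ) 1),
      (t < T → Tendsto (fun t' => αinv (α t')) (𝓝[>] t) (𝓝 t)) ∧
      (t = T → αinv (α T) = T) := by
  intro t ht
  have hS : ∀ s : ℝ, s ≤ 1 → T ∈ {u : ℝ | u ∈ Icc 0 T ∧ s ≤ α u} := by
    intro s hs; exact ⟨⟨hT.le, le_refl T⟩, by rw [hαT]; exact hs⟩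
  have hbdd : ∀ s : ℝ, BddBelow {u : ℝ | u ∈ Icc 0 T ∧ s ≤ α u} :=
    fun s => ⟨0, fun u hu => hu.1.1⟩
  have hmem : ∀ s : ℝ, s ≤ 1 → αinv s ∈ Icc (0:ℝ) T := by
    intro s hs
    rw [hαinv]
    exact ⟨le_csInf ⟨T, hS s hs⟩ fun u hu => hu.1.1, csInf_le (hbdd s) (hS s hs)⟩
  have hmono' : ∀ s s' : ℝ, s ≤ s' → s' ≤ 1 → αinv s ≤ αinv s' := by
    intro s s' hss hs'
    rw [hαinv, hαinv]
    exact csInf_le_csInf (hbdd s) ⟨T, hS s' hs'⟩ fun u hu => ⟨hu.1, hss.trans hu.2⟩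
  have hle : ∀ u ∈ Icc (0:ℝ) T, αinv (α u) ≤ u := by
    intro u hu
    rw [hαinv]
    exact csInf_le (hbdd _) ⟨hu, le_refl _⟩
  have hkey : ∀ s : ℝ, s ≤ 1 → ∀ u ∈ Icc (0:ℝ) T, αinv s < u → s ≤ α u := by
    intro s hs u hu h
    rw [hαinv] at h
    obtain ⟨v, hv, hvu⟩ := exists_lt_of_csInf_lt ⟨T, hS s hs⟩ h
    exact hv.2.trans (hmono hv.1 hu hvu.le)
  have himg : ∀ p ∈ αinv '' Icc (0:ℝ) 1, ∀ u ∈ Icc (0:ℝ) T, p < u → p ≤ αinv (α u) := by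
    intro p hp u hu hpu
    obtain ⟨s, hs, rfl⟩ := hp
    exact hmono' s (α u) (hkey s hs.2 u hu hpu) (hrange u hu).2
  have htmem : t ∈ Icc (0:ℝ) T := by
    have hsub : closure (αinv '' Icc (0:ℝ) 1) ⊆ Icc 0 T := by
      apply closure_minimal _ isClosed_Icc
      rintro p ⟨s, hs, rfl⟩; exact hmem s hs.2
    exact hsub ht
  constructor
  · intro htT
    have hlow : ∀ u ∈ Ioc t T, t ≤ αinv (α u) := by
      intro u hu
      by_contra h
      push_neg at h
      have hpos : (0:ℝ) < min (t - αinv (α u)) (u - t) :=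
        lt_min (by linarith) (by linarith [hu.1])
      obtain ⟨p, hp, hdist⟩ := Metric.mem_closure_iff.mp ht _ hpos
      rw [Real.dist_eq] at hdist
      have hd := abs_lt.mp hdist
      have hm1 := min_le_right (t - αinv (α u)) (u - t)
      have hm2 := min_le_left (t - αinv (α u)) (u - t)
      have h1 : p < u := by linarith [hd.1]
      have h2 : αinv (α u) < p := by linarith [hd.2]
      have := himg p hp u ⟨le_trans htmem.1 hu.1.le, hu.2⟩ h1
      have := hle u ⟨le_trans htmem.1 hu.1.le, hu.2⟩
      linarith
    have hev : Ioc t T ∈ 𝓝[>] t := Ioc_mem_nhdsGT_of_mem ⟨le_refl t, htT⟩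
    apply tendsto_of_tendsto_of_tendsto_of_le_of_le'
      (tendsto_const_nhds : Tendsto (fun _ : ℝ => t) (𝓝[>] t) (𝓝 t))
      (tendsto_id.mono_left nhdsWithin_le_nhds)
    · exact Filter.eventually_iff_exists_mem.mpr ⟨_, hev, fun u hu => hlow u hu⟩
    · exact Filter.eventually_iff_exists_mem.mpr
        ⟨_, hev, fun u hu => hle u ⟨le_trans htmem.1 hu.1.le, hu.2⟩⟩
  · intro hteq
    rw [hteq] at ht
    have h1 : αinv (α T) ≤ T := hle T ⟨hT.le, le_refl T⟩
    have h2 : T ≤ αinv (α T) := by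
      rw [hαT]
      by_contra h
      push_neg at h
      obtain ⟨p, hp, hdist⟩ := Metric.mem_closure_iff.mp ht _ (sub_pos.mpr h)
      obtain ⟨s, hs, rfl⟩ := hp
      have hmle : αinv s ≤ αinv 1 := hmono' s 1 hs.2 le_rfl
      rw [Real.dist_eq] at hdist
      have := (abs_lt.mp hdist).2
      linarith
    linarith
end

section
/- Let D ≥ 1, n ≥ 1, and let q_1, …, q_n ∈ Q_∞ be bounded increasing right-continuous paths [0,1) → S^D_+ with left limits, with left-continuous versions q⃗_1, …, q⃗_n. Set T = Σ_{k=1}^n tr q⃗_k(1) and assume T > 0. Then there exist a single p.d.f. α on [0,T] and functions L_1, …, L_n : [0,T] → S^D_+ such that: each L_k is increasing for the positive semidefinite order with L_k(0) = 0; q⃗_k(s) = L_k(α⁻¹(s)) for every s ∈ (0,1] and every k; Σ_{k=1}^n tr L_k(t) = t for every t ∈ [0,T]; and (Σ_{k=1}^n |L_k(t) − L_k(t')|²)^{1/2} ≤ √(nD) · |t − t'| for all t, t' ∈ [0,T]. -/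
open Set Filter Topology Matrix

namespace CJDAux

variable {D : ℕ}

lemma psd_diag_nonneg {A : Matrix (Fin D) (Fin D) ℝ} (hA : A.PosSemidef) (i : Fin D) :
    0 ≤ A i i := by
  have := hA.dotProduct_mulVec_nonneg (Pi.single i 1)
  simpa [Matrix.mulVec, dotProduct, Pi.single_apply] using this

lemma psd_symm {A : Matrix (Fin D) (Fin D) ℝ} (hA : A.PosSemidef) (i j : Fin D) :
    A j i = A i j := by
  have := hA.1.apply i j
  simpa using this

lemma psd_entry_sq_le {A : Matrix (Fin D) (Fin D) ℝ} (hA : A.PosSemidef) (i j : Fin D) :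
    (A i j) ^ 2 ≤ A i i * A j j := by
  by_cases hij : i = j
  · subst hij
    have := psd_diag_nonneg hA i
    nlinarith
  · have key : ∀ c : ℝ, 0 ≤ A i i * (c * c) + (2 * A i j) * c + A j j := by
      intro c
      have h := hA.dotProduct_mulVec_nonneg (fun l => (if l = i then c else 0) + (if l = j then 1 else 0))
      have hsym := psd_symm hA i j
      simp only [star_trivial, dotProduct, Matrix.mulVec, mul_add, add_mul,
        mul_ite, ite_mul, mul_zero, zero_mul, mul_one, one_mul,
        Finset.sum_add_distrib, Finset.sum_ite_eq', Finset.mem_univ, if_true] at h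
      rw [hsym] at h
      ring_nf at h ⊢
      linarith [h]
    have h2 := discrim_le_zero key
    rw [discrim] at h2
    nlinarith

lemma trace_mul_transpose_eq (A : Matrix (Fin D) (Fin D) ℝ) :
    (A * Aᵀ).trace = ∑ i, ∑ j, (A i j) ^ 2 := by
  simp [Matrix.trace, Matrix.diag, Matrix.mul_apply, Matrix.transpose_apply, sq]

lemma psd_trace_nonneg {A : Matrix (Fin D) (Fin D) ℝ} (hA : A.PosSemidef) :
    0 ≤ A.trace := by
  rw [Matrix.trace]
  exact Finset.sum_nonneg fun i _ => psd_diag_nonneg hA i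

lemma psd_frob_le_trace_sq {A : Matrix (Fin D) (Fin D) ℝ} (hA : A.PosSemidef) :
    (A * Aᵀ).trace ≤ A.trace ^ 2 := by
  rw [trace_mul_transpose_eq, Matrix.trace]
  have : (∑ i, A.diag i) ^ 2 = ∑ i, ∑ j, A i i * A j j := by
    rw [sq, Finset.sum_mul_sum]
    rfl
  rw [this]
  exact Finset.sum_le_sum fun i _ => Finset.sum_le_sum fun j _ => psd_entry_sq_le hA i j

lemma psd_eq_zero_of_trace {A : Matrix (Fin D) (Fin D) ℝ} (hA : A.PosSemidef)
    (h : A.trace = 0) : A = 0 := by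
  have hdiag : ∀ i, A i i = 0 := by
    intro i
    exact (Finset.sum_eq_zero_iff_of_nonneg
      (fun i _ => psd_diag_nonneg hA i)).mp h i (Finset.mem_univ i)
  ext i j
  have h1 := psd_entry_sq_le hA i j
  rw [hdiag i, hdiag j, mul_zero] at h1
  have h2 := sq_nonneg (A i j)
  have : (A i j) ^ 2 = 0 := le_antisymm h1 h2
  simpa [pow_eq_zero_iff] using this

lemma psd_smul {A : Matrix (Fin D) (Fin D) ℝ} (hA : A.PosSemidef) {c : ℝ} (hc : 0 ≤ c) :
    (c • A).PosSemidef := by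
  refine Matrix.PosSemidef.of_dotProduct_mulVec_nonneg ?_ fun x => ?_
  · have h1 := hA.1
    rw [Matrix.IsHermitian] at h1 ⊢
    rw [Matrix.conjTranspose_smul, h1]
    simp
  · rw [Matrix.smul_mulVec, dotProduct_smul, smul_eq_mul]
    exact mul_nonneg hc (hA.dotProduct_mulVec_nonneg x)

lemma psd_of_tendsto {l : Filter ℝ} [l.NeBot] {F : ℝ → Matrix (Fin D) (Fin D) ℝ}
    {A : Matrix (Fin D) (Fin D) ℝ} (hF : Tendsto F l (𝓝 A))
    (h : ∀ᶠ x in l, (F x).PosSemidef) : A.PosSemidef := by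
  refine Matrix.PosSemidef.of_dotProduct_mulVec_nonneg ?_ ?_
  · have h1 : Tendsto (fun x => (F x)ᴴ) l (𝓝 Aᴴ) :=
      ((continuous_id.matrix_conjTranspose (R := ℝ)).tendsto A).comp hF
    have h2 : Tendsto (fun x => (F x)ᴴ) l (𝓝 A) := by
      refine Tendsto.congr' ?_ hF
      filter_upwards [h] with x hx using hx.1.symm ▸ rfl
    exact tendsto_nhds_unique h1 h2
  · intro x
    have hcont : Continuous fun M : Matrix (Fin D) (Fin D) ℝ => star x ⬝ᵥ M *ᵥ x :=
      (continuous_const.dotProduct (continuous_id.matrix_mulVec continuous_const))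
    have h1 : Tendsto (fun s => star x ⬝ᵥ (F s) *ᵥ x) l (𝓝 (star x ⬝ᵥ A *ᵥ x)) :=
      (hcont.tendsto A).comp hF
    refine le_of_tendsto_of_tendsto tendsto_const_nhds h1 ?_
    filter_upwards [h] with s hs using hs.dotProduct_mulVec_nonneg x

lemma trace_tendsto {l : Filter ℝ} {F : ℝ → Matrix (Fin D) (Fin D) ℝ}
    {A : Matrix (Fin D) (Fin D) ℝ} (hF : Tendsto F l (𝓝 A)) :
    Tendsto (fun x => (F x).trace) l (𝓝 A.trace) :=
  ((continuous_id.matrix_trace).tendsto A).comp hF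

end CJDAux

open CJDAux

/-- Let `D ≥ 1`, `n ≥ 1`, and let `q 1, …, q n ∈ Q_∞` be bounded
increasing right-continuous paths `[0,1) → S^D_+` with left limits, with
left-continuous versions `qv k`.  Set `T = Σ_k tr (qv k 1) > 0`.  Then there exist
a single p.d.f. `α` on `[0,T]` and paths `L k : [0,T] → S^D_+` such that: each
`L k` is increasing for the PSD order with `L k 0 = 0`; `qv k s = L k (α⁻¹ s)` for
every `s ∈ (0,1]` and every `k`; `Σ_k tr (L k t) = t` for every `t ∈ [0,T]`; and
`(Σ_k |L k t − L k t'|²)^(1/2) ≤ √(n D) · |t − t'|` for all `t, t' ∈ [0,T]`. -/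
theorem exists_canonical_joint_decomposition
    (D n : ℕ) (hD : 1 ≤ D) (hn : 1 ≤ n)
    (q qv : Fin n → ℝ → Matrix (Fin D) (Fin D) ℝ)
    (hpsd : ∀ k, ∀ s ∈ Ico (0:ℝ) 1, (q k s).PosSemidef)
    (hmono : ∀ k, ∀ ⦃u v : ℝ⦄, u ∈ Ico (0:ℝ) 1 → v ∈ Ico (0:ℝ) 1 → u ≤ v →
      (q k v - q k u).PosSemidef)
    (hq_rc : ∀ k, ∀ s ∈ Ico (0:ℝ) 1, Tendsto (q k) (𝓝[>] s) (𝓝 (q k s)))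
    (hbdd : ∃ C : ℝ, ∀ k, ∀ s ∈ Ico (0:ℝ) 1,
      Real.sqrt ((q k s * (q k s)ᵀ).trace) ≤ C)
    (hqv0 : ∀ k, qv k 0 = 0)
    (hqv : ∀ k, ∀ s ∈ Ioc (0:ℝ) 1, Tendsto (q k) (𝓝[<] s) (𝓝 (qv k s)))
    (T : ℝ) (hTdef : T = ∑ k, (qv k 1).trace) (hT : 0 < T) :
    ∃ (L : Fin n → ℝ → Matrix (Fin D) (Fin D) ℝ) (α : ℝ → ℝ),
      (∀ t ∈ Icc (0:ℝ) T, α t ∈ Icc (0:ℝ) 1) ∧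
      (∀ ⦃t t' : ℝ⦄, t ∈ Icc 0 T → t' ∈ Icc 0 T → t ≤ t' → α t ≤ α t') ∧
      (∀ t ∈ Ico (0:ℝ) T, Tendsto α (𝓝[>] t) (𝓝 (α t))) ∧
      α T = 1 ∧
      (∀ k, ∀ t ∈ Icc (0:ℝ) T, (L k t).PosSemidef) ∧
      (∀ k, ∀ ⦃t t' : ℝ⦄, t ∈ Icc 0 T → t' ∈ Icc 0 T → t ≤ t' →
        (L k t' - L k t).PosSemidef) ∧
      (∀ k, L k 0 = 0) ∧
      (∀ k, ∀ s ∈ Ioc (0:ℝ) 1, qv k s = L k (sInf {t : ℝ | t ∈ Icc 0 T ∧ s ≤ α t})) ∧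
      (∀ t ∈ Icc (0:ℝ) T, ∑ k, (L k t).trace = t) ∧
      (∀ t ∈ Icc (0:ℝ) T, ∀ t' ∈ Icc (0:ℝ) T,
        Real.sqrt (∑ k, ((L k t - L k t') * (L k t - L k t')ᵀ).trace)
          ≤ Real.sqrt (n * D) * |t - t'|) := by
  classical
  -- basic positivity facts
  have P2 : ∀ k, ∀ u v : ℝ, 0 ≤ u → u < v → v ≤ 1 → (qv k v - q k u).PosSemidef := by
    intro k u v hu huv hv1
    have hlim : Tendsto (fun w => q k w - q k u) (𝓝[<] v) (𝓝 (qv k v - q k u)) :=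
      (hqv k v ⟨lt_of_le_of_lt hu huv, hv1⟩).sub tendsto_const_nhds
    refine psd_of_tendsto hlim ?_
    filter_upwards [Ioo_mem_nhdsLT_of_mem (⟨huv, le_refl v⟩ : v ∈ Ioc u v)] with w hw
    exact hmono k ⟨hu, lt_of_lt_of_le huv hv1⟩
      ⟨le_trans hu hw.1.le, lt_of_lt_of_le hw.2 hv1⟩ hw.1.le
  have P1 : ∀ k, ∀ s : ℝ, 0 ≤ s → s ≤ 1 → (qv k s).PosSemidef := by
    intro k s hs hs1
    rcases eq_or_lt_of_le hs with h | h
    · rw [← h, hqv0 k]; exact Matrix.PosSemidef.zero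
    · refine psd_of_tendsto (hqv k s ⟨h, hs1⟩) ?_
      filter_upwards [Ioo_mem_nhdsLT_of_mem (⟨h, le_refl s⟩ : s ∈ Ioc 0 s)] with w hw
      exact hpsd k w ⟨hw.1.le, lt_of_lt_of_le hw.2 hs1⟩
  have P3 : ∀ k, ∀ u v : ℝ, 0 ≤ u → u ≤ v → v ≤ 1 → (qv k v - qv k u).PosSemidef := by
    intro k u v hu huv hv1
    rcases eq_or_lt_of_le huv with h | h
    · rw [h, sub_self]; exact Matrix.PosSemidef.zero
    · rcases eq_or_lt_of_le hu with h0 | h0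
      · rw [← h0, hqv0 k, sub_zero]; exact P1 k v (le_trans hu huv) hv1
      · have hlim : Tendsto (fun w => qv k v - q k w) (𝓝[<] u) (𝓝 (qv k v - qv k u)) :=
          tendsto_const_nhds.sub (hqv k u ⟨h0, le_trans huv hv1⟩)
        refine psd_of_tendsto hlim ?_
        filter_upwards [Ioo_mem_nhdsLT_of_mem (⟨h0, le_refl u⟩ : u ∈ Ioc 0 u)] with w hw
        exact P2 k w v hw.1.le (lt_trans hw.2 h) hv1
  have P4 : ∀ k, ∀ s : ℝ, 0 ≤ s → s < 1 → (q k s - qv k s).PosSemidef := by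
    intro k s hs hs1
    rcases eq_or_lt_of_le hs with h | h
    · rw [← h, hqv0 k, sub_zero]; exact hpsd k 0 ⟨le_refl 0, one_pos⟩
    · have hlim : Tendsto (fun w => q k s - q k w) (𝓝[<] s) (𝓝 (q k s - qv k s)) :=
        tendsto_const_nhds.sub (hqv k s ⟨h, hs1.le⟩)
      refine psd_of_tendsto hlim ?_
      filter_upwards [Ioo_mem_nhdsLT_of_mem (⟨h, le_refl s⟩ : s ∈ Ioc 0 s)] with w hw
      exact hmono k ⟨hw.1.le, lt_trans hw.2 hs1⟩ ⟨hs, hs1⟩ hw.2.le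
  -- scalar envelope functions
  set f : ℝ → ℝ := fun s => ∑ k, (qv k s).trace with hfdef
  set g : ℝ → ℝ := fun s => ∑ k, (q k s).trace with hgdef
  have f0 : f 0 = 0 := by simp [hfdef, hqv0]
  have fT : f 1 = T := hTdef.symm
  have fmono : ∀ u v : ℝ, 0 ≤ u → u ≤ v → v ≤ 1 → f u ≤ f v := by
    intro u v hu huv hv1
    have : 0 ≤ f v - f u := by
      rw [hfdef]
      simp only [← Finset.sum_sub_distrib, ← Matrix.trace_sub]
      exact Finset.sum_nonneg fun k _ => psd_trace_nonneg (P3 k u v hu huv hv1)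
    linarith
  have fnn : ∀ s : ℝ, 0 ≤ s → s ≤ 1 → 0 ≤ f s := fun s hs hs1 => f0 ▸ fmono 0 s le_rfl hs hs1
  have gf : ∀ u v : ℝ, 0 ≤ u → u < v → v ≤ 1 → g u ≤ f v := by
    intro u v hu huv hv1
    have : 0 ≤ f v - g u := by
      rw [hfdef, hgdef]
      simp only [← Finset.sum_sub_distrib, ← Matrix.trace_sub]
      exact Finset.sum_nonneg fun k _ => psd_trace_nonneg (P2 k u v hu huv hv1)
    linarith
  have fg : ∀ s : ℝ, 0 ≤ s → s < 1 → f s ≤ g s := by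
    intro s hs hs1
    have : 0 ≤ g s - f s := by
      rw [hfdef, hgdef]
      simp only [← Finset.sum_sub_distrib, ← Matrix.trace_sub]
      exact Finset.sum_nonneg fun k _ => psd_trace_nonneg (P4 k s hs hs1)
    linarith
  -- equality of qv from equality of f
  have hconst : ∀ (u v : ℝ), 0 ≤ u → u ≤ v → v ≤ 1 → f u = f v → ∀ k, qv k u = qv k v := by
    intro u v hu huv hv1 hfeq k
    have hsum : ∑ j, (qv j v - qv j u).trace = 0 := by
      simp only [Matrix.trace_sub, Finset.sum_sub_distrib]
      show f v - f u = 0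
      rw [hfeq, sub_self]
    have hzero : (qv k v - qv k u).trace = 0 :=
      (Finset.sum_eq_zero_iff_of_nonneg
        (fun j _ => psd_trace_nonneg (P3 j u v hu huv hv1))).mp hsum k (Finset.mem_univ k)
    have := psd_eq_zero_of_trace (P3 k u v hu huv hv1) hzero
    have := sub_eq_zero.mp this
    exact this.symm
  -- left continuity bound for f
  have LC : ∀ s t : ℝ, 0 < s → s ≤ 1 → (∀ u, 0 ≤ u → u < s → f u ≤ t) → f s ≤ t := by
    intro s t hs hs1 hu
    have hlim : Tendsto g (𝓝[<] s) (𝓝 (f s)) := by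
      rw [hgdef, hfdef]
      exact tendsto_finset_sum _ fun k _ => trace_tendsto (hqv k s ⟨hs, hs1⟩)
    refine le_of_tendsto hlim ?_
    filter_upwards [Ioo_mem_nhdsLT_of_mem (⟨hs, le_refl s⟩ : s ∈ Ioc 0 s)] with w hw
    have h1 : g w ≤ f ((w + s) / 2) := by
      refine gf w ((w + s) / 2) hw.1.le (by linarith [hw.2]) (by nlinarith [hw.2, hs1])
    exact le_trans h1 (hu _ (by linarith [hw.1]) (by linarith [hw.2]))
  -- the quantile-type inverse
  set S : ℝ → Set ℝ := fun t => {s : ℝ | s ∈ Icc (0:ℝ) 1 ∧ f s ≤ t} with hSdef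
  set α : ℝ → ℝ := fun t => sSup (S t) with hαdef
  have hS0 : ∀ t : ℝ, 0 ≤ t → (0:ℝ) ∈ S t := by
    intro t ht; exact ⟨⟨le_rfl, zero_le_one⟩, by rw [f0]; exact ht⟩
  have hSbdd : ∀ t : ℝ, BddAbove (S t) := by
    intro t; exact ⟨1, fun s hs => hs.1.2⟩
  have hα01 : ∀ t : ℝ, 0 ≤ t → α t ∈ Icc (0:ℝ) 1 := by
    intro t ht
    exact ⟨le_csSup (hSbdd t) (hS0 t ht), csSup_le ⟨0, hS0 t ht⟩ fun s hs => hs.1.2⟩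
  have hαmono : ∀ t t' : ℝ, 0 ≤ t → t ≤ t' → α t ≤ α t' := by
    intro t t' ht htt'
    exact csSup_le_csSup (hSbdd t') ⟨0, hS0 t ht⟩ fun s hs => ⟨hs.1, le_trans hs.2 htt'⟩
  have hα1 : ∀ t : ℝ, 0 ≤ t → f (α t) ≤ t := by
    intro t ht
    rcases eq_or_lt_of_le (hα01 t ht).1 with h | h
    · rw [← h, f0]; exact ht
    · refine LC (α t) t h (hα01 t ht).2 fun u hu hus => ?_
      obtain ⟨v, hvS, huv⟩ := exists_lt_of_lt_csSup ⟨0, hS0 t ht⟩ hus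
      exact le_trans (fmono u v hu huv.le hvS.1.2) hvS.2
  have hαiff : ∀ s t : ℝ, s ∈ Icc (0:ℝ) 1 → 0 ≤ t → (s ≤ α t ↔ f s ≤ t) := by
    intro s t hs ht
    constructor
    · intro h
      exact le_trans (fmono s (α t) hs.1 h (hα01 t ht).2) (hα1 t ht)
    · intro h
      exact le_csSup (hSbdd t) ⟨hs, h⟩
  have hαTeq : ∀ t : ℝ, 0 ≤ t → t ≤ T → α t = 1 → t = T := by
    intro t ht htT hα
    have h1 : f 1 ≤ t := by
      refine LC 1 t one_pos le_rfl fun u hu hu1 => ?_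
      have : u < α t := hα ▸ hu1
      obtain ⟨v, hvS, huv⟩ := exists_lt_of_lt_csSup ⟨0, hS0 t ht⟩ this
      exact le_trans (fmono u v hu huv.le hvS.1.2) hvS.2
    rw [fT] at h1
    linarith
  have hαT : α T = 1 := by
    refine le_antisymm (hα01 T hT.le).2 ?_
    exact (hαiff 1 T ⟨zero_le_one, le_rfl⟩ hT.le).mpr (le_of_eq fT)
  -- key inequality : t ≤ g (α t) whenever α t < 1
  have KEY : ∀ t : ℝ, 0 ≤ t → t ≤ T → α t < 1 → t ≤ g (α t) := by
    intro t ht htT hα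
    have hα0 : 0 ≤ α t := (hα01 t ht).1
    have hflim : Tendsto f (𝓝[>] (α t)) (𝓝 (g (α t))) := by
      have hglim : Tendsto g (𝓝[>] (α t)) (𝓝 (g (α t))) := by
        rw [hgdef]
        exact tendsto_finset_sum _ fun k _ => trace_tendsto (hq_rc k (α t) ⟨hα0, hα⟩)
      refine tendsto_of_tendsto_of_tendsto_of_le_of_le' tendsto_const_nhds hglim ?_ ?_
      · filter_upwards [Ioo_mem_nhdsGT_of_mem (⟨le_refl _, hα⟩ : α t ∈ Ico (α t) 1)] with w hw
        exact gf (α t) w hα0 hw.1 hw.2.le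
      · filter_upwards [Ioo_mem_nhdsGT_of_mem (⟨le_refl _, hα⟩ : α t ∈ Ico (α t) 1)] with w hw
        exact fg w (le_trans hα0 hw.1.le) hw.2
    refine ge_of_tendsto hflim ?_
    filter_upwards [Ioo_mem_nhdsGT_of_mem (⟨le_refl _, hα⟩ : α t ∈ Ico (α t) 1)] with w hw
    by_contra hc
    push_neg at hc
    have : w ≤ α t := (hαiff w t ⟨le_trans hα0 hw.1.le, hw.2.le⟩ ht).mpr hc.le
    exact absurd hw.1 (not_lt.mpr this)
  -- interpolation parameter
  set d : ℝ → ℝ := fun t => g (α t) - f (α t) with hddef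
  set ρ : ℝ → ℝ := fun t => if 0 < d t then (t - f (α t)) / d t else 0 with hρdef
  set L : Fin n → ℝ → Matrix (Fin D) (Fin D) ℝ :=
    fun k t => if α t = 1 then qv k 1 else qv k (α t) + ρ t • (q k (α t) - qv k (α t))
    with hLdef
  -- properties of ρ
  have hd_nonneg : ∀ t : ℝ, 0 ≤ t → α t < 1 → 0 ≤ d t := by
    intro t ht hα
    simp only [hddef]
    exact sub_nonneg.mpr (fg (α t) (hα01 t ht).1 hα)
  have hρ_nonneg : ∀ t : ℝ, 0 ≤ t → 0 ≤ ρ t := by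
    intro t ht
    simp only [hρdef]
    split_ifs with h
    · exact div_nonneg (sub_nonneg.mpr (hα1 t ht)) h.le
    · exact le_rfl
  have hρ_le_one : ∀ t : ℝ, 0 ≤ t → t ≤ T → α t < 1 → ρ t ≤ 1 := by
    intro t ht htT hα
    simp only [hρdef]
    split_ifs with h
    · rw [div_le_one h]
      have h1 := KEY t ht htT hα
      simp only [hddef]
      linarith
    · exact zero_le_one
  have hρ_trace : ∀ t : ℝ, 0 ≤ t → t ≤ T → α t < 1 → f (α t) + ρ t * d t = t := by
    intro t ht htT hα
    simp only [hρdef]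
    split_ifs with h
    · rw [div_mul_cancel₀ _ (ne_of_gt h)]; ring
    · push_neg at h
      have h0 : d t = 0 := le_antisymm h (hd_nonneg t ht hα)
      have h1 := KEY t ht htT hα
      have h2 : g (α t) - f (α t) = 0 := h0
      have h3 := hα1 t ht
      rw [zero_mul, add_zero]
      linarith
  -- positive semidefiniteness of L
  have hLpsd : ∀ k, ∀ t : ℝ, 0 ≤ t → t ≤ T → (L k t).PosSemidef := by
    intro k t ht htT
    simp only [hLdef]
    split_ifs with h1
    · exact P1 k 1 zero_le_one le_rfl
    · have hα : α t < 1 := lt_of_le_of_ne (hα01 t ht).2 h1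
      exact (P1 k (α t) (hα01 t ht).1 (hα01 t ht).2).add
        (psd_smul (P4 k (α t) (hα01 t ht).1 hα) (hρ_nonneg t ht))
  -- L at 0
  have hα0lt : α 0 < 1 := by
    rcases lt_or_eq_of_le (hα01 0 le_rfl).2 with h | h
    · exact h
    · exact absurd (hαTeq 0 le_rfl hT.le h).symm (ne_of_gt hT)
  have hL0 : ∀ k, L k 0 = 0 := by
    intro k
    have hf0' : f (α 0) = 0 :=
      le_antisymm (hα1 0 le_rfl) (fnn (α 0) (hα01 0 le_rfl).1 (hα01 0 le_rfl).2)
    have hρ0 : ρ 0 = 0 := by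
      simp only [hρdef]
      split_ifs with h
      · rw [hf0', sub_zero, zero_div]
      · rfl
    simp only [hLdef, if_neg (ne_of_lt hα0lt), hρ0, zero_smul, add_zero]
    have := hconst 0 (α 0) le_rfl (hα01 0 le_rfl).1 (hα01 0 le_rfl).2 (by rw [f0, hf0']) k
    rw [← this, hqv0]
  -- monotonicity of L
  have hL_mono : ∀ k, ∀ t t' : ℝ, 0 ≤ t → t ≤ T → 0 ≤ t' → t' ≤ T → t ≤ t' →
      (L k t' - L k t).PosSemidef := by
    intro k t t' ht htT ht' ht'T htt'
    have hs01 := hα01 t ht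
    have hs11 := hα01 t' ht'
    have hαle : α t ≤ α t' := hαmono t t' ht htt'
    rcases eq_or_lt_of_le hαle with heq | hlt
    · by_cases h1 : α t' = 1
      · have h0 : α t = 1 := heq.trans h1
        simp only [hLdef, if_pos h1, if_pos h0, sub_self]
        exact Matrix.PosSemidef.zero
      · have h0 : α t ≠ 1 := by rw [heq]; exact h1
        have hρρ : ρ t ≤ ρ t' := by
          have hdd : d t = d t' := by simp only [hddef, heq]
          simp only [hρdef]
          rw [hdd, heq]
          split_ifs with h
          · exact (div_le_div_iff_of_pos_right h).mpr (by linarith)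
          · exact le_rfl
        simp only [hLdef, if_neg h0, if_neg h1, heq]
        have hcalc : qv k (α t') + ρ t' • (q k (α t') - qv k (α t')) -
            (qv k (α t') + ρ t • (q k (α t') - qv k (α t'))) =
            (ρ t' - ρ t) • (q k (α t') - qv k (α t')) := by
          rw [sub_smul]; abel
        rw [hcalc]
        exact psd_smul (P4 k (α t') hs11.1 (lt_of_le_of_ne hs11.2 h1))
          (sub_nonneg.mpr hρρ)
    · have hαt1 : α t < 1 := lt_of_lt_of_le hlt hs11.2
      have hup : (q k (α t) - L k t).PosSemidef := by
        simp only [hLdef, if_neg (ne_of_lt hαt1)]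
        have hcalc : q k (α t) - (qv k (α t) + ρ t • (q k (α t) - qv k (α t))) =
            (1 - ρ t) • (q k (α t) - qv k (α t)) := by
          rw [sub_smul, one_smul]; abel
        rw [hcalc]
        exact psd_smul (P4 k (α t) hs01.1 hαt1)
          (sub_nonneg.mpr (hρ_le_one t ht htT hαt1))
      have hmid : (qv k (α t') - q k (α t)).PosSemidef := P2 k (α t) (α t') hs01.1 hlt hs11.2
      have hlow : (L k t' - qv k (α t')).PosSemidef := by
        by_cases h1 : α t' = 1
        · simp only [hLdef, if_pos h1, h1, sub_self]
          exact Matrix.PosSemidef.zero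
        · simp only [hLdef, if_neg h1, add_sub_cancel_left]
          exact psd_smul (P4 k (α t') hs11.1 (lt_of_le_of_ne hs11.2 h1)) (hρ_nonneg t' ht')
      have hcalc : L k t' - L k t =
          L k t' - qv k (α t') + (qv k (α t') - q k (α t)) + (q k (α t) - L k t) := by abel
      rw [hcalc]
      exact (hlow.add hmid).add hup
  -- trace identity
  have hLtrace : ∀ t : ℝ, 0 ≤ t → t ≤ T → ∑ k, (L k t).trace = t := by
    intro t ht htT
    by_cases h1 : α t = 1
    · simp only [hLdef, if_pos h1]
      rw [← hTdef]
      exact (hαTeq t ht htT h1).symm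
    · have hα : α t < 1 := lt_of_le_of_ne (hα01 t ht).2 h1
      simp only [hLdef, if_neg h1, Matrix.trace_add, Matrix.trace_smul, Matrix.trace_sub,
        Finset.sum_add_distrib, smul_eq_mul]
      rw [← Finset.mul_sum]
      have hds : ∑ k, ((q k (α t)).trace - (qv k (α t)).trace) = d t := by
        simp only [hddef, hgdef, hfdef, Finset.sum_sub_distrib]
      rw [hds]
      exact hρ_trace t ht htT hα
  -- the quantile identity
  have hquant : ∀ k, ∀ s ∈ Ioc (0:ℝ) 1,
      qv k s = L k (sInf {t : ℝ | t ∈ Icc 0 T ∧ s ≤ α t}) := by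
    intro k s hs
    have hs01 : s ∈ Icc (0:ℝ) 1 := ⟨hs.1.le, hs.2⟩
    have hfs0 : 0 ≤ f s := fnn s hs01.1 hs01.2
    have hfsT : f s ≤ T := fT ▸ fmono s 1 hs01.1 hs01.2 le_rfl
    have hset : {t : ℝ | t ∈ Icc 0 T ∧ s ≤ α t} = Icc (f s) T := by
      ext t
      simp only [mem_setOf_eq, mem_Icc]
      constructor
      · rintro ⟨⟨ht0, htT⟩, hsα⟩
        exact ⟨(hαiff s t hs01 ht0).mp hsα, htT⟩
      · rintro ⟨h1, h2⟩
        have ht0 : 0 ≤ t := le_trans hfs0 h1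
        exact ⟨⟨ht0, h2⟩, (hαiff s t hs01 ht0).mpr h1⟩
    rw [hset, csInf_Icc hfsT]
    have hsα : s ≤ α (f s) := (hαiff s (f s) hs01 hfs0).mpr le_rfl
    have hfeq : f (α (f s)) = f s :=
      le_antisymm (hα1 (f s) hfs0) (fmono s (α (f s)) hs01.1 hsα (hα01 (f s) hfs0).2)
    by_cases h1 : α (f s) = 1
    · simp only [hLdef, if_pos h1]
      refine hconst s 1 hs01.1 hs01.2 le_rfl ?_ k
      rw [← h1]
      exact hfeq.symm
    · have hρz : ρ (f s) = 0 := by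
        simp only [hρdef]
        rw [hfeq]
        split_ifs with h
        · rw [sub_self, zero_div]
        · rfl
      simp only [hLdef, if_neg h1, hρz, zero_smul, add_zero]
      exact hconst s (α (f s)) hs01.1 hsα (hα01 (f s) hfs0).2 hfeq.symm k
  -- right continuity of α
  have hαrc : ∀ t ∈ Ico (0:ℝ) T, Tendsto α (𝓝[>] t) (𝓝 (α t)) := by
    intro t ht
    rw [tendsto_order]
    constructor
    · intro b hb
      filter_upwards [self_mem_nhdsWithin] with t' ht'
      exact lt_of_lt_of_le hb (hαmono t t' ht.1 (le_of_lt ht'))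
    · intro b hb
      have hα1' : α t < 1 := by
        rcases lt_or_eq_of_le (hα01 t ht.1).2 with h | h
        · exact h
        · exact absurd (hαTeq t ht.1 ht.2.le h) (ne_of_lt ht.2)
      have hwit : ∃ t₀ : ℝ, t < t₀ ∧ t₀ ≤ T ∧ α t₀ < b := by
        by_contra hc
        push_neg at hc
        set s : ℝ := min ((α t + b) / 2) 1 with hsdef
        have hsgt : α t < s := lt_min (by linarith) hα1'
        have hslt : s < b := lt_of_le_of_lt (min_le_left _ _) (by linarith)
        have hs01 : s ∈ Icc (0:ℝ) 1 := ⟨le_trans (hα01 t ht.1).1 hsgt.le, min_le_right _ _⟩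
        have hfle : ∀ t₀ : ℝ, t < t₀ → t₀ ≤ T → f s ≤ t₀ := by
          intro t₀ h1 h2
          have hb' : b ≤ α t₀ := hc t₀ h1 h2
          exact (hαiff s t₀ hs01 (le_trans ht.1 h1.le)).mp (le_trans hslt.le hb')
        have hfst : f s ≤ t := by
          by_contra hfc
          push_neg at hfc
          have h1 : t < min ((t + f s) / 2) T := lt_min (by linarith) ht.2
          have h2 : min ((t + f s) / 2) T ≤ T := min_le_right _ _
          have h3 := hfle _ h1 h2
          have h4 : min ((t + f s) / 2) T ≤ (t + f s) / 2 := min_le_left _ _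
          linarith
        exact absurd ((hαiff s t hs01 ht.1).mpr hfst) (not_le.mpr hsgt)
      obtain ⟨t₀, h1, h2, h3⟩ := hwit
      filter_upwards [Ioo_mem_nhdsGT_of_mem (⟨le_refl t, h1⟩ : t ∈ Ico t t₀)] with t' ht'
      exact lt_of_le_of_lt (hαmono t' t₀ (le_trans ht.1 ht'.1.le) ht'.2.le) h3
  -- Lipschitz estimate
  have hnD : (1:ℝ) ≤ Real.sqrt (n * D) := by
    rw [show (1:ℝ) = Real.sqrt 1 by rw [Real.sqrt_one]]
    apply Real.sqrt_le_sqrt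
    have h1 : (1:ℝ) ≤ (n:ℝ) := by exact_mod_cast hn
    have h2 : (1:ℝ) ≤ (D:ℝ) := by exact_mod_cast hD
    nlinarith
  have hLip : ∀ t : ℝ, 0 ≤ t → t ≤ T → ∀ t' : ℝ, 0 ≤ t' → t' ≤ T → t ≤ t' →
      Real.sqrt (∑ k, ((L k t' - L k t) * (L k t' - L k t)ᵀ).trace)
        ≤ Real.sqrt (n * D) * |t' - t| := by
    intro t ht htT t' ht' ht'T htt'
    have hΔ : ∀ k : Fin n, (L k t' - L k t).PosSemidef :=
      fun k => hL_mono k t t' ht htT ht' ht'T htt'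
    have step1 : ∑ k, ((L k t' - L k t) * (L k t' - L k t)ᵀ).trace
        ≤ ∑ k, ((L k t' - L k t).trace) ^ 2 :=
      Finset.sum_le_sum fun k _ => psd_frob_le_trace_sq (hΔ k)
    have step2 : ∑ k, ((L k t' - L k t).trace) ^ 2
        ≤ (∑ k, (L k t' - L k t).trace) ^ 2 :=
      Finset.sum_sq_le_sq_sum_of_nonneg fun k _ => psd_trace_nonneg (hΔ k)
    have step3 : ∑ k, (L k t' - L k t).trace = t' - t := by
      simp only [Matrix.trace_sub, Finset.sum_sub_distrib]
      rw [hLtrace t' ht' ht'T, hLtrace t ht htT]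
    have step4 : Real.sqrt (∑ k, ((L k t' - L k t) * (L k t' - L k t)ᵀ).trace)
        ≤ |t' - t| := by
      rw [show |t' - t| = Real.sqrt ((t' - t) ^ 2) by rw [Real.sqrt_sq_eq_abs]]
      apply Real.sqrt_le_sqrt
      calc ∑ k, ((L k t' - L k t) * (L k t' - L k t)ᵀ).trace
          ≤ (∑ k, (L k t' - L k t).trace) ^ 2 := le_trans step1 step2
        _ = (t' - t) ^ 2 := by rw [step3]
    calc Real.sqrt (∑ k, ((L k t' - L k t) * (L k t' - L k t)ᵀ).trace)
        ≤ |t' - t| := step4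
      _ = 1 * |t' - t| := (one_mul _).symm
      _ ≤ Real.sqrt (n * D) * |t' - t| := by
          exact mul_le_mul_of_nonneg_right hnD (abs_nonneg _)
  -- assemble
  refine ⟨L, α, ?_, ?_, hαrc, hαT, ?_, ?_, hL0, hquant, ?_, ?_⟩
  · intro t ht
    exact hα01 t ht.1
  · intro t t' ht ht' htt'
    exact hαmono t t' ht.1 htt'
  · intro k t ht
    exact hLpsd k t ht.1 ht.2
  · intro k t t' ht ht' htt'
    exact hL_mono k t t' ht.1 ht.2 ht'.1 ht'.2 htt'
  · intro t ht
    exact hLtrace t ht.1 ht.2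
  · intro t ht t' ht'
    rcases le_total t t' with h | h
    · have := hLip t ht.1 ht.2 t' ht'.1 ht'.2 h
      have habs : |t' - t| = |t - t'| := abs_sub_comm t' t
      have hmm : ∀ k : Fin n, (L k t - L k t') * (L k t - L k t')ᵀ
          = (L k t' - L k t) * (L k t' - L k t)ᵀ := by
        intro k
        rw [show L k t - L k t' = -(L k t' - L k t) by abel, Matrix.transpose_neg,
          Matrix.neg_mul, Matrix.mul_neg, neg_neg]
      simp only [hmm]
      rw [abs_sub_comm t t']
      exact this
    · have := hLip t' ht'.1 ht'.2 t ht.1 ht.2 h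
      exact this
end

section
/- Let D ≥ 1, let q ∈ Q_∞ with left-continuous version q⃗, let T > 0, and let (L, α) be any decomposition of q on [0,T]. Then for every t ∈ supp dα, L(t) equals the right limit at t of the composed function t' ↦ q⃗(α(t')); that is, L(t) = lim_{t' ↓ t} q⃗(α(t')) for t < T, and L(T) = q⃗(α(T)) = q⃗(1) when t = T. In particular, q⃗ and α determine L on supp dα. -/
open Set Filter Topology Matrix MeasureTheory


private lemma entry_le_frobenius {D : ℕ} (M : Matrix (Fin D) (Fin D) ℝ) (i j : Fin D) :
    |M i j| ≤ Real.sqrt ((M * Mᵀ).trace) := by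
  have h1 : (M * Mᵀ).trace = ∑ a, ∑ b, (M a b)^2 := by
    simp [Matrix.trace, Matrix.mul_apply, Matrix.diag, sq]
  rw [h1, ← Real.sqrt_sq_eq_abs]
  apply Real.sqrt_le_sqrt
  calc (M i j)^2 ≤ ∑ b, (M i b)^2 :=
        Finset.single_le_sum (f := fun b => (M i b)^2)
          (fun b _ => sq_nonneg _) (Finset.mem_univ j)
    _ ≤ ∑ a, ∑ b, (M a b)^2 :=
        Finset.single_le_sum (f := fun a => ∑ b, (M a b)^2)
          (fun a _ => Finset.sum_nonneg fun b _ => sq_nonneg _) (Finset.mem_univ i)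

/-- Let `D ≥ 1`, let `q ∈ Q_∞` with left-continuous version
`qv`, let `T > 0`, and let `(L, α)` be any decomposition of `q` on `[0,T]` (`L`
Lipschitz and increasing for the PSD order, `α` a p.d.f. on `[0,T]`, and
`qv s = L (α⁻¹ s)` for `s ∈ (0,1]`).  Then for every `t` in the support of `dα`
(the smallest closed set of full measure for the Lebesgue–Stieltjes measure of
the extension `F` of `α`), `L t` is the right limit at `t` of `t' ↦ qv (α t')`:
`L t = lim_{t' ↓ t} qv (α t')` for `t < T`, and `L T = qv (α T)` when `t = T`.
In particular `qv` and `α` determine `L` on `supp dα`. -/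
theorem decomposition_determined_on_support
    (D : ℕ) (hD : 1 ≤ D) (T : ℝ) (hT : 0 < T)
    (q qv : ℝ → Matrix (Fin D) (Fin D) ℝ)
    (hpsd : ∀ s ∈ Ico (0:ℝ) 1, (q s).PosSemidef)
    (hmono : ∀ ⦃u v : ℝ⦄, u ∈ Ico (0:ℝ) 1 → v ∈ Ico (0:ℝ) 1 → u ≤ v →
      (q v - q u).PosSemidef)
    (hq_rc : ∀ s ∈ Ico (0:ℝ) 1, Tendsto q (𝓝[>] s) (𝓝 (q s)))
    (hbdd : ∃ C : ℝ, ∀ s ∈ Ico (0:ℝ) 1, Real.sqrt ((q s * (q s)ᵀ).trace) ≤ C)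
    (hqv0 : qv 0 = 0)
    (hqv : ∀ s ∈ Ioc (0:ℝ) 1, Tendsto q (𝓝[<] s) (𝓝 (qv s)))
    (α : ℝ → ℝ)
    (hα_range : ∀ t ∈ Icc (0:ℝ) T, α t ∈ Icc (0:ℝ) 1)
    (hα_mono : ∀ ⦃t t' : ℝ⦄, t ∈ Icc 0 T → t' ∈ Icc 0 T → t ≤ t' → α t ≤ α t')
    (hα_rc : ∀ t ∈ Ico (0:ℝ) T, Tendsto α (𝓝[>] t) (𝓝 (α t)))
    (hαT : α T = 1)
    (L : ℝ → Matrix (Fin D) (Fin D) ℝ)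
    (hL_psd : ∀ t ∈ Icc (0:ℝ) T, (L t).PosSemidef)
    (hL_mono : ∀ ⦃t t' : ℝ⦄, t ∈ Icc 0 T → t' ∈ Icc 0 T → t ≤ t' →
      (L t' - L t).PosSemidef)
    (hL_lip : ∃ K : ℝ, ∀ t ∈ Icc (0:ℝ) T, ∀ t' ∈ Icc (0:ℝ) T,
      Real.sqrt (((L t - L t') * (L t - L t')ᵀ).trace) ≤ K * |t - t'|)
    (hdecomp : ∀ s ∈ Ioc (0:ℝ) 1, qv s = L (sInf {t : ℝ | t ∈ Icc 0 T ∧ s ≤ α t}))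
    (F : StieltjesFunction ℝ)
    (hF : ∀ t : ℝ, F t = if t < 0 then 0 else if t ≤ T then α t else 1) :
    ∀ t ∈ ⋂₀ {K : Set ℝ | IsClosed K ∧ F.measure Kᶜ = 0},
      (t < T → Tendsto (fun t' => qv (α t')) (𝓝[>] t) (𝓝 (L t))) ∧
      (t = T → L T = qv (α T)) := by

  obtain ⟨K, hK⟩ := hL_lip
  have hT0 : (0:ℝ) ≤ T := hT.le
  have hTmem : T ∈ Icc (0:ℝ) T := ⟨hT0, le_rfl⟩
  have h0mem : (0:ℝ) ∈ Icc (0:ℝ) T := ⟨le_rfl, hT0⟩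
  have hK0 : 0 ≤ K := by
    have h1 := hK 0 h0mem T hTmem
    rw [zero_sub, abs_neg, abs_of_nonneg hT0] at h1
    nlinarith [Real.sqrt_nonneg (((L 0 - L T) * (L 0 - L T)ᵀ).trace)]
  have hFnn : ∀ x, 0 ≤ F x := by
    intro x
    rw [hF]
    split_ifs with h1 h2
    · exact le_rfl
    · exact (hα_range x ⟨not_lt.1 h1, h2⟩).1
    · exact zero_le_one
  have hFeq : ∀ x, 0 ≤ x → x ≤ T → F x = α x := by
    intro x hx0 hxT
    rw [hF, if_neg (not_lt.2 hx0), if_pos hxT]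
  have hzero : ∀ a b : ℝ, F b ≤ F a → F.measure (Ioo a b) = 0 := by
    intro a b h
    rw [StieltjesFunction.measure_Ioo, ENNReal.ofReal_eq_zero]
    have h2 := F.mono.leftLim_le (le_refl b)
    linarith
  intro t ht
  have hsupp : ∀ a b : ℝ, a < t → t < b → F.measure (Ioo a b) ≠ 0 := by
    intro a b ha hb h
    have htK := ht (Ioo a b)ᶜ ⟨isOpen_Ioo.isClosed_compl, by rwa [compl_compl]⟩
    exact htK ⟨ha, hb⟩
  have ht0 : 0 ≤ t := by
    by_contra h
    push_neg at h
    refine hsupp (t-1) (t/2) (by linarith) (by linarith) (hzero _ _ ?_)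
    have h1 : F (t/2) = 0 := by rw [hF, if_pos (by linarith)]
    rw [h1]; exact hFnn _
  constructor
  · intro htT
    have htmem : t ∈ Icc (0:ℝ) T := ⟨ht0, htT.le⟩
    have key : ∀ t' ∈ Ioo t T, ∀ i j, |qv (α t') i j - L t i j| ≤ K * (t' - t) := by
      intro t' ht' i j
      have ht'mem : t' ∈ Icc (0:ℝ) T := ⟨ht0.trans ht'.1.le, ht'.2.le⟩
      have hαpos : 0 < α t' := by
        rcases (hα_range t' ht'mem).1.lt_or_eq with h | h
        · exact h
        · exfalso
          refine hsupp (t-1) t' (by linarith) ht'.1 (hzero _ _ ?_)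
          rw [hFeq t' ht'mem.1 ht'mem.2, ← h]
          exact hFnn _
      have hlb : ∀ u ∈ {u : ℝ | u ∈ Icc 0 T ∧ α t' ≤ α u}, t ≤ u := by
        intro u hu
        by_contra hut
        push_neg at hut
        refine hsupp u t' hut ht'.1 (hzero _ _ ?_)
        rw [hFeq u hu.1.1 hu.1.2, hFeq t' ht'mem.1 ht'mem.2]
        exact hu.2
      have ht'S : t' ∈ {u : ℝ | u ∈ Icc 0 T ∧ α t' ≤ α u} := ⟨ht'mem, le_rfl⟩
      have hc1 : t ≤ sInf {u : ℝ | u ∈ Icc 0 T ∧ α t' ≤ α u} :=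
        le_csInf ⟨t', ht'S⟩ hlb
      have hc2 : sInf {u : ℝ | u ∈ Icc 0 T ∧ α t' ≤ α u} ≤ t' :=
        csInf_le ⟨t, hlb⟩ ht'S
      have hdec : qv (α t') = L (sInf {u : ℝ | u ∈ Icc 0 T ∧ α t' ≤ α u}) :=
        hdecomp (α t') ⟨hαpos, (hα_range t' ht'mem).2⟩
      have hcmem : sInf {u : ℝ | u ∈ Icc 0 T ∧ α t' ≤ α u} ∈ Icc (0:ℝ) T :=
        ⟨ht0.trans hc1, hc2.trans ht'mem.2⟩
      have hlip := hK _ hcmem t htmem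
      have hentry := entry_le_frobenius (L (sInf {u : ℝ | u ∈ Icc 0 T ∧ α t' ≤ α u}) - L t) i j
      have habs : |sInf {u : ℝ | u ∈ Icc 0 T ∧ α t' ≤ α u} - t| ≤ t' - t := by
        rw [abs_of_nonneg (by linarith)]
        linarith
      calc |qv (α t') i j - L t i j|
          = |(L (sInf {u : ℝ | u ∈ Icc 0 T ∧ α t' ≤ α u}) - L t) i j| := by
            rw [hdec, Matrix.sub_apply]
        _ ≤ _ := hentry
        _ ≤ K * |sInf {u : ℝ | u ∈ Icc 0 T ∧ α t' ≤ α u} - t| := hlip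
        _ ≤ K * (t' - t) := mul_le_mul_of_nonneg_left habs hK0
    refine tendsto_pi_nhds.2 fun i => tendsto_pi_nhds.2 fun j => ?_
    have hb : Tendsto (fun t' : ℝ => K * (t' - t)) (𝓝[>] t) (𝓝 0) := by
      have h1 : Tendsto (fun t' : ℝ => K * (t' - t)) (𝓝 t) (𝓝 (K * (t - t))) :=
        (tendsto_id.sub tendsto_const_nhds).const_mul K
      simpa using h1.mono_left nhdsWithin_le_nhds
    have hup : Tendsto (fun t' : ℝ => L t i j + K * (t' - t)) (𝓝[>] t) (𝓝 (L t i j)) := by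
      simpa using tendsto_const_nhds.add hb
    have hlo : Tendsto (fun t' : ℝ => L t i j - K * (t' - t)) (𝓝[>] t) (𝓝 (L t i j)) := by
      simpa using tendsto_const_nhds.sub hb
    refine tendsto_of_tendsto_of_tendsto_of_le_of_le' hlo hup ?_ ?_
    · filter_upwards [Ioo_mem_nhdsGT_of_mem ⟨le_rfl, htT⟩] with t' ht'
      have h1 := (abs_le.1 (key t' ht' i j)).1
      linarith
    · filter_upwards [Ioo_mem_nhdsGT_of_mem ⟨le_rfl, htT⟩] with t' ht'
      have h1 := (abs_le.1 (key t' ht' i j)).2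
      linarith
  · intro htT
    subst htT
    rw [hαT, hdecomp 1 ⟨one_pos, le_rfl⟩]
    refine congrArg L ?_
    have hTS : t ∈ {u : ℝ | u ∈ Icc 0 t ∧ (1:ℝ) ≤ α u} := ⟨⟨ht0, le_rfl⟩, hαT.ge⟩
    refine le_antisymm ?_ (csInf_le ⟨0, fun u hu => hu.1.1⟩ hTS)
    refine le_csInf ⟨t, hTS⟩ fun u hu => ?_
    by_contra huT
    push_neg at huT
    refine hsupp u (t+1) huT (by linarith) (hzero _ _ ?_)
    have h1 : F (t+1) = 1 := by rw [hF, if_neg (by linarith), if_neg (by linarith)]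
    have h2 : F u = 1 := by
      rw [hFeq u hu.1.1 hu.1.2]
      exact le_antisymm (hα_range u hu.1).2 hu.2
    rw [h1, h2]
end
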